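/- Let P be a poset and α > 0 a limit ordinal. If the poset I(P^{<α}) of initial segments of the embeddability quasi-order P^{<α}, ordered by inclusion, is wqo, then both P^α and P^{<α} are wqo. -/

import Mathlib

universe u v

open Set

/-- `r` is an initial segment of `X ⊆ ℕ`: `r ⊆ X` and every element of `X` not in `r`
is greater than every element of `r`. -/
def NatInitSeg (r : Finset ℕ) (X : Set ℕ) : Prop :=
  ↑r ⊆ X ∧ ∀ x ∈ X, x ∉ r → ∀ y ∈ r, y < x

/-- `B` is a barrier: an infinite inclusion-antichain of finite subsets of `ℕ` such that
every infinite subset of the base has an initial segment in `B`. -/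
def IsBarrier (B : Set (Finset ℕ)) : Prop :=
  B.Infinite ∧
  (∀ x ∈ B, ∀ y ∈ B, x ⊆ y → x = y) ∧
  (∀ X : Set ℕ, X ⊆ (⋃ b ∈ B, (↑b : Set ℕ)) → X.Infinite → ∃ r ∈ B, NatInitSeg r X)

/-- `t` is a proper initial segment of the finite set `s`. -/
def FinsetProperInitSeg (t s : Finset ℕ) : Prop :=
  t ⊆ s ∧ t ≠ s ∧ ∀ x ∈ s, x ∉ t → ∀ y ∈ t, y < x

/-- The shift-extension relation `r ◁ s`: `min r < min s` and `r \ {min r}` is a proper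
initial segment of `s`. -/
def ShiftExt (r s : Finset ℕ) : Prop :=
  ∃ m ∈ r, (∀ x ∈ r, m ≤ x) ∧ (∀ y ∈ s, m < y) ∧ FinsetProperInitSeg (r.erase m) s

/-- A map `f` from a barrier `B` into `X` is good for the relation `le`. -/
def GoodOn {X : Type*} (le : X → X → Prop) (B : Set (Finset ℕ)) (f : Finset ℕ → X) : Prop :=
  ∃ s ∈ B, ∃ t ∈ B, ShiftExt s t ∧ le (f s) (f t)

/-- Well quasi-order for a relation: every `ℕ`-sequence is good. -/
def IsWqoRel {X : Type*} (le : X → X → Prop) : Prop :=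
  ∀ p : ℕ → X, ∃ i j : ℕ, i < j ∧ le (p i) (p j)

/-- Better quasi-order: every map from every barrier is good. -/
def IsBqoRel {X : Type*} (le : X → X → Prop) : Prop :=
  ∀ B : Set (Finset ℕ), IsBarrier B → ∀ f : Finset ℕ → X, GoodOn le B f

/-- The (strict) lexicographic order on finite subsets of `ℕ`:
`r < s` iff `r ≠ s` and the least element of the symmetric difference belongs to `r`. -/
def FinsetLexLt (r s : Finset ℕ) : Prop :=
  r ≠ s ∧ ∀ m ∈ symmDiff r s, (∀ x ∈ symmDiff r s, m ≤ x) → m ∈ r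

/-- The barrier `B` has lexicographic order type `≤ α`: there is a lex-strictly-increasing
ordinal-valued function on `B` bounded by `α`. -/
def BarrierTypeLE (B : Set (Finset ℕ)) (α : Ordinal.{0}) : Prop :=
  ∃ g : Finset ℕ → Ordinal.{0}, (∀ b ∈ B, g b < α) ∧
    ∀ b₁ ∈ B, ∀ b₂ ∈ B, FinsetLexLt b₁ b₂ → g b₁ < g b₂

/-- `α`-wqo: every map from a barrier of order type `≤ α` is good. -/
def IsAlphaWqoRel {X : Type*} (le : X → X → Prop) (α : Ordinal.{0}) : Prop :=
  ∀ B : Set (Finset ℕ), IsBarrier B → BarrierTypeLE B α →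
    ∀ f : Finset ℕ → X, GoodOn le B f

/-- `σ`-bqo: a wqo which is a countable union of sets, each bqo in the induced order. -/
def IsSigmaBqoRel {X : Type*} (le : X → X → Prop) : Prop :=
  IsWqoRel le ∧
  ∃ S : ℕ → Set X, (⋃ n, S n) = Set.univ ∧
    ∀ n, IsBqoRel (fun x y : S n => le x.1 y.1)

/-- Sequences of length `α` from `P`. -/
abbrev OrdSeq (P : Type u) (α : Ordinal.{0}) := {β : Ordinal.{0} // β < α} → P

/-- The embeddability quasi-order on `P^α`. -/
def OrdSeqLE {P : Type u} [Preorder P] {α : Ordinal.{0}} (f g : OrdSeq P α) : Prop :=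
  ∃ ρ : {β : Ordinal.{0} // β < α} → {β : Ordinal.{0} // β < α},
    StrictMono ρ ∧ ∀ γ, f γ ≤ g (ρ γ)

/-- Sequences of length `< α` from `P`. -/
abbrev OrdSeqLt (P : Type u) (α : Ordinal.{0}) :=
  Σ β : {β : Ordinal.{0} // β < α}, ({γ : Ordinal.{0} // γ < β.1} → P)

/-- The embeddability quasi-order on `P^{<α}`. -/
def OrdSeqLtLE {P : Type u} [Preorder P] {α : Ordinal.{0}} (f g : OrdSeqLt P α) : Prop :=
  ∃ ρ : {γ : Ordinal.{0} // γ < f.1.1} → {γ : Ordinal.{0} // γ < g.1.1},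
    StrictMono ρ ∧ ∀ δ, f.2 δ ≤ g.2 (ρ δ)

/-- The Dress–Schiffels relation: `f ≤DS g` iff `f i < g i` for every `i` maximal in
`Δ(f,g) = {j | f j ≠ g j}`. -/
def DSle {I : Type u} [PartialOrder I] {P : I → Type v} [∀ i, PartialOrder (P i)]
    (f g : ∀ i, P i) : Prop :=
  ∀ i : I, Maximal (fun j => f j ≠ g j) i → f i < g i

/-- The underlying set of the Dress–Schiffels product: finitely supported functions. -/
abbrev DSProd (I : Type u) [PartialOrder I] (P : I → Type v) [∀ i, PartialOrder (P i)]
    [∀ i, OrderBot (P i)] :=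
  {f : ∀ i, P i // {i | f i ≠ ⊥}.Finite}

section Aux

variable {P : Type u} [PartialOrder P]

lemma ordSeqLtLE_refl {α : Ordinal.{0}} (f : OrdSeqLt P α) : OrdSeqLtLE f f :=
  ⟨id, strictMono_id, fun _ => le_refl _⟩

lemma ordSeqLtLE_trans {α : Ordinal.{0}} {f g k : OrdSeqLt P α}
    (h1 : OrdSeqLtLE f g) (h2 : OrdSeqLtLE g k) : OrdSeqLtLE f k := by
  obtain ⟨ρ, hρ, hle⟩ := h1
  obtain ⟨σ, hσ, hle'⟩ := h2
  exact ⟨σ ∘ ρ, hσ.comp hρ, fun δ => (hle δ).trans (hle' (ρ δ))⟩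

/-- The leftmost embedding of `p` into `q` below `α`, defined by transfinite recursion. -/
noncomputable def leftmost (α : Ordinal.{0}) (p q : Ordinal.{0} → P) :
    Ordinal.{0} → Ordinal.{0} :=
  Ordinal.lt_wf.fix (fun β ih =>
    sInf {δ | δ < α ∧ p β ≤ q δ ∧ ∀ β' (h : β' < β), ih β' h < δ})

lemma leftmost_eq (α : Ordinal.{0}) (p q : Ordinal.{0} → P) (β : Ordinal.{0}) :
    leftmost α p q β =
      sInf {δ | δ < α ∧ p β ≤ q δ ∧ ∀ β' < β, leftmost α p q β' < δ} := by
  rw [leftmost, Ordinal.lt_wf.fix_eq]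

lemma leftmost_spec (α : Ordinal.{0}) (p q : Ordinal.{0} → P) :
    ∀ β : Ordinal.{0}, ∀ σ : Ordinal.{0} → Ordinal.{0},
      (∀ δ ≤ β, σ δ < α) →
      (∀ δ₁, δ₁ ≤ β → ∀ δ₂, δ₂ ≤ β → δ₁ < δ₂ → σ δ₁ < σ δ₂) →
      (∀ δ ≤ β, p δ ≤ q (σ δ)) →
      leftmost α p q β < α ∧ p β ≤ q (leftmost α p q β) ∧
        (∀ β' < β, leftmost α p q β' < leftmost α p q β) ∧
        leftmost α p q β ≤ σ β := by
  intro β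
  induction β using Ordinal.induction with
  | h β IH =>
    intro σ hσα hσmono hσle
    have hmem : σ β ∈ {δ | δ < α ∧ p β ≤ q δ ∧ ∀ β' < β, leftmost α p q β' < δ} := by
      refine ⟨hσα β le_rfl, hσle β le_rfl, fun β' hβ' => ?_⟩
      have hIH := IH β' hβ' σ (fun δ hδ => hσα δ (hδ.trans hβ'.le))
        (fun d1 h1 d2 h2 => hσmono d1 (h1.trans hβ'.le) d2 (h2.trans hβ'.le))
        (fun δ hδ => hσle δ (hδ.trans hβ'.le))
      exact lt_of_le_of_lt hIH.2.2.2 (hσmono β' hβ'.le β le_rfl hβ')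
    have hmem' : leftmost α p q β ∈
        {δ | δ < α ∧ p β ≤ q δ ∧ ∀ β' < β, leftmost α p q β' < δ} := by
      rw [leftmost_eq]
      exact csInf_mem ⟨σ β, hmem⟩
    refine ⟨hmem'.1, hmem'.2.1, hmem'.2.2, ?_⟩
    rw [leftmost_eq]
    exact csInf_le' hmem

/-- Key lemma: if every proper initial segment of `p` embeds boundedly into `q`,
then `p` embeds into `q` (for `α` a limit). -/
lemma embed_of_initials {α : Ordinal.{0}} (hα : Order.IsSuccLimit α) (p q : Ordinal.{0} → P)
    (H : ∀ β < α, ∃ σ : Ordinal.{0} → Ordinal.{0},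
      (∀ δ < β, σ δ < α) ∧ (∀ δ₁ < β, ∀ δ₂ < β, δ₁ < δ₂ → σ δ₁ < σ δ₂) ∧
      ∀ δ < β, p δ ≤ q (σ δ)) :
    ∃ ρ : Ordinal.{0} → Ordinal.{0}, (∀ β < α, ρ β < α) ∧
      (∀ β₁ < α, ∀ β₂ < α, β₁ < β₂ → ρ β₁ < ρ β₂) ∧ ∀ β < α, p β ≤ q (ρ β) := by
  have key : ∀ β < α, leftmost α p q β < α ∧ p β ≤ q (leftmost α p q β) ∧
      ∀ β' < β, leftmost α p q β' < leftmost α p q β := by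
    intro β hβ
    obtain ⟨σ, hσα, hσmono, hσle⟩ := H (Order.succ β) (hα.succ_lt hβ)
    have hspec := leftmost_spec α p q β σ
      (fun δ hδ => hσα δ (Order.lt_succ_iff.mpr hδ))
      (fun d1 h1 d2 h2 => hσmono d1 (Order.lt_succ_iff.mpr h1) d2 (Order.lt_succ_iff.mpr h2))
      (fun δ hδ => hσle δ (Order.lt_succ_iff.mpr hδ))
    exact ⟨hspec.1, hspec.2.1, hspec.2.2.1⟩
  exact ⟨leftmost α p q, fun β hβ => (key β hβ).1,
    fun β₁ _ β₂ hβ₂ h12 => (key β₂ hβ₂).2.2 β₁ h12,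
    fun β hβ => (key β hβ).2.1⟩

end Aux

/-- For a limit ordinal `α > 0`, if the poset `I(P^{<α})` of initial segments of `P^{<α}`
ordered by inclusion is wqo, then both `P^α` and `P^{<α}` are wqo. -/
theorem stmt_3 {P : Type u} [PartialOrder P] (α : Ordinal.{0}) (hα : Order.IsSuccLimit α)
    (h : IsWqoRel (fun A B : {A : Set (OrdSeqLt P α) //
        ∀ s t : OrdSeqLt P α, OrdSeqLtLE s t → t ∈ A → s ∈ A} => A.1 ⊆ B.1)) :
    IsWqoRel (OrdSeqLE (P := P) (α := α)) ∧ IsWqoRel (OrdSeqLtLE (P := P) (α := α)) := by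
  constructor
  · intro p
    -- restriction of `p n` to length `β`
    let res : ℕ → {β : Ordinal.{0} // β < α} → OrdSeqLt P α :=
      fun n β => ⟨β, fun γ => p n ⟨γ.1, γ.2.trans β.2⟩⟩
    let A : ℕ → {A : Set (OrdSeqLt P α) //
        ∀ s t : OrdSeqLt P α, OrdSeqLtLE s t → t ∈ A → s ∈ A} :=
      fun n => ⟨{s | ∃ β, OrdSeqLtLE s (res n β)},
        fun s t hst ht => by
          obtain ⟨β, htβ⟩ := ht
          exact ⟨β, ordSeqLtLE_trans hst htβ⟩⟩
    obtain ⟨i, j, hij, hsub⟩ := h A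
    -- extended versions of `p i` and `p j`
    let p' : ℕ → Ordinal.{0} → P :=
      fun n β => if hβ : β < α then p n ⟨β, hβ⟩ else p n ⟨0, hα.pos⟩
    have H : ∀ β < α, ∃ σ : Ordinal.{0} → Ordinal.{0},
        (∀ δ < β, σ δ < α) ∧ (∀ δ₁ < β, ∀ δ₂ < β, δ₁ < δ₂ → σ δ₁ < σ δ₂) ∧
        ∀ δ < β, p' i δ ≤ p' j (σ δ) := by
      intro β hβ
      have hmem : res i ⟨β, hβ⟩ ∈ (A j).1 :=
        hsub ⟨⟨β, hβ⟩, ordSeqLtLE_refl _⟩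
      obtain ⟨γ, σ, hσ, hle⟩ := hmem
      refine ⟨fun δ => if hδ : δ < β then (σ ⟨δ, hδ⟩).1 else 0, ?_, ?_, ?_⟩
      · intro δ hδ
        simp only [dif_pos hδ]
        exact (σ ⟨δ, hδ⟩).2.trans γ.2
      · intro d1 h1 d2 h2 h12
        simp only [dif_pos h1, dif_pos h2]
        exact hσ (show (⟨d1, h1⟩ : {γ : Ordinal.{0} // γ < β}) < ⟨d2, h2⟩ from h12)
      · intro δ hδ
        have h1 : δ < α := hδ.trans hβ
        have h2 : (σ ⟨δ, hδ⟩).1 < α := (σ ⟨δ, hδ⟩).2.trans γ.2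
        simp only [p', dif_pos hδ, dif_pos h1, dif_pos h2]
        exact hle ⟨δ, hδ⟩
    obtain ⟨ρ, hρα, hρmono, hρle⟩ := embed_of_initials hα (p' i) (p' j) H
    refine ⟨i, j, hij, fun b => ⟨ρ b.1, hρα b.1 b.2⟩, ?_, ?_⟩
    · intro a b hab
      exact hρmono a.1 a.2 b.1 b.2 hab
    · intro γ
      have := hρle γ.1 γ.2
      simpa only [p', dif_pos γ.2, dif_pos (hρα γ.1 γ.2)] using this
  · intro p
    let A : ℕ → {A : Set (OrdSeqLt P α) //
        ∀ s t : OrdSeqLt P α, OrdSeqLtLE s t → t ∈ A → s ∈ A} :=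
      fun n => ⟨{s | OrdSeqLtLE s (p n)}, fun s t hst ht => ordSeqLtLE_trans hst ht⟩
    obtain ⟨i, j, hij, hsub⟩ := h A
    exact ⟨i, j, hij, hsub (ordSeqLtLE_refl (p i))⟩
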